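/- Let D be a generically Egyptian integral domain with fraction field K, let L be a field extension of K, and let R be a ring with D ⊆ R ⊆ L such that R is finitely generated as a D-algebra. Then R is generically Egyptian. -/

import Mathlib

universe u

/-- A commutative ring `D` is *Egyptian* if every nonzero `d : D` is a sum of reciprocals
`d = 1/d₁ + ⋯ + 1/dₙ` of finitely many pairwise distinct nonzero elements `dᵢ` of `D`, the
equality holding in any field in which `D` embeds.  (For an integral domain `D` this is
equivalent to the usual definition, in which the equality is required in the fraction field
of `D`: such an equality holds in one field containing `D` iff it holds in all of them.) -/
def IsEgyptian (D : Type u) [CommRing D] : Prop :=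
  ∀ d : D, d ≠ 0 → ∃ s : Finset D, (∀ i ∈ s, i ≠ 0) ∧
    ∀ (K : Type u) [Field K] (φ : D →+* K), Function.Injective φ →
      φ d = ∑ i ∈ s, (φ i)⁻¹

/-- A domain `D` is *generically Egyptian* if `D[1/f]` is Egyptian for some nonzero `f : D`. -/
def IsGenericallyEgyptian (D : Type u) [CommRing D] : Prop :=
  ∃ f : D, f ≠ 0 ∧ IsEgyptian (Localization.Away f)

/-- A domain `D` is *locally Egyptian* if there is a finite set of generators of the unit
ideal of `D` such that inverting any one of them yields an Egyptian ring. -/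
def IsLocallyEgyptian (D : Type u) [CommRing D] : Prop :=
  ∃ s : Finset D, Ideal.span (s : Set D) = ⊤ ∧
    ∀ f ∈ s, IsEgyptian (Localization.Away f)

section Transfer

variable {B : Type*} {C : Type*} [CommRing B] [IsDomain B] [CommRing C]

lemma isEgyptian_of_ringEquiv (e : B ≃+* C) (hB : IsEgyptian B) : IsEgyptian C := by
  classical
  intro d hd
  have hb : e.symm d ≠ 0 := by
    intro h
    apply hd
    have := congrArg e h
    simpa using this
  obtain ⟨s, hs0, hcert⟩ := hB (e.symm d) hb
  refine ⟨s.image e, ?_, ?_⟩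
  · rintro i hi
    obtain ⟨j, hj, rfl⟩ := Finset.mem_image.mp hi
    intro h0
    exact hs0 j hj (by simpa using congrArg e.symm h0)
  · intro K _ φ hφ
    have hg : Function.Injective (φ.comp e.toRingHom) := by
      intro x y h
      exact e.injective (hφ h)
    have hFinj : Function.Injective (algebraMap B (FractionRing B)) :=
      IsFractionRing.injective B (FractionRing B)
    have key := hcert (FractionRing B) (algebraMap B (FractionRing B)) hFinj
    have hlift : ∀ x : B, IsFractionRing.lift hg (algebraMap B (FractionRing B) x)
        = φ (e x) := by
      intro x; rw [IsFractionRing.lift_algebraMap]; rfl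
    have := congrArg (IsFractionRing.lift hg) key
    rw [map_sum] at this
    simp only [map_inv₀, hlift] at this
    rw [Finset.sum_image (fun x hx y hy h => e.injective h)]
    simpa using this

lemma isGenericallyEgyptian_of_ringEquiv (e : B ≃+* C) (h : IsGenericallyEgyptian B) :
    IsGenericallyEgyptian C := by
  obtain ⟨f, hf, hE⟩ := h
  have hef : e f ≠ 0 := by
    intro h0; exact hf (by simpa using congrArg e.symm h0)
  refine ⟨e f, hef, ?_⟩
  haveI : IsDomain (Localization.Away f) :=
    IsLocalization.isDomain_localization (powers_le_nonZeroDivisors_of_noZeroDivisors hf)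
  have e2 : Localization.Away f ≃+* Localization.Away (e f) :=
    IsLocalization.ringEquivOfRingEquiv (M := Submonoid.powers f)
      (T := Submonoid.powers (e f))
      (Localization.Away f) (Localization.Away (e f))
      (e : B ≃+* C) (Submonoid.map_powers e.toMonoidHom f)
  exact isEgyptian_of_ringEquiv e2 hE

end Transfer

section SubringField
set_option synthInstance.maxHeartbeats 1000000
set_option maxHeartbeats 1000000

variable {L : Type u} [Field L]

lemma subring_spec_of_isEgyptian (B : Subring L) (hB : IsEgyptian ↥B) :
    ∀ b : ↥B, b ≠ 0 → ∃ s : Finset ↥B, (∀ i ∈ s, i ≠ 0) ∧ (b : L) = ∑ i ∈ s, (i : L)⁻¹ := by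
  intro b hb
  obtain ⟨s, hs0, hcert⟩ := hB b hb
  refine ⟨s, hs0, ?_⟩
  have := hcert L B.subtype (fun x y h => Subtype.ext h)
  simpa using this

lemma isEgyptian_subring (B : Subring L)
    (h : ∀ b : ↥B, b ≠ 0 → ∃ s : Finset ↥B, (∀ i ∈ s, i ≠ 0) ∧ (b : L) = ∑ i ∈ s, (i : L)⁻¹) :
    IsEgyptian ↥B := by
  intro d hd
  obtain ⟨s, hs0, hsum⟩ := h d hd
  refine ⟨s, hs0, ?_⟩
  intro K _ φ hφ
  have hιinj : Function.Injective (B.subtype) := fun x y h => Subtype.ext h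
  have hj : ∀ x : ↥B,
      IsFractionRing.lift (K := FractionRing ↥B) hιinj (algebraMap ↥B (FractionRing ↥B) x)
        = (x : L) := by
    intro x; rw [IsFractionRing.lift_algebraMap]; rfl
  have hjinj : Function.Injective (IsFractionRing.lift (K := FractionRing ↥B) hιinj) :=
    RingHom.injective _
  have keyF : algebraMap ↥B (FractionRing ↥B) d
      = ∑ i ∈ s, (algebraMap ↥B (FractionRing ↥B) i)⁻¹ := by
    apply hjinj
    rw [map_sum, hj]
    simp only [map_inv₀, hj]
    exact hsum
  have := congrArg (IsFractionRing.lift (K := FractionRing ↥B) (g := φ) hφ) keyF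
  rw [map_sum] at this
  simp only [map_inv₀, IsFractionRing.lift_algebraMap] at this
  exact this

/-- Overring-style lemma: if every element of `B` is a fraction of elements of the
Egyptian subring `A ≤ B`, then `B` is Egyptian. -/
lemma isEgyptian_of_fractions {A B : Subring L} (hle : A ≤ B) (hA : IsEgyptian ↥A)
    (hfrac : ∀ x : ↥B, x ≠ 0 → ∃ a m : ↥A, (a : L) ≠ 0 ∧ (m : L) ≠ 0 ∧
      (x : L) * (m : L) = (a : L)) : IsEgyptian ↥B := by
  classical
  apply isEgyptian_subring
  intro b hb
  obtain ⟨a, m, ha, hm, heq⟩ := hfrac b hb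
  have ha' : a ≠ 0 := fun h => ha (by simp [h])
  obtain ⟨s, hs0, hsum⟩ := subring_spec_of_isEgyptian A hA a ha'
  refine ⟨s.image (fun d : ↥A => (⟨(d : L) * (m : L), B.mul_mem (hle d.2) (hle m.2)⟩ : ↥B)), ?_, ?_⟩
  · rintro i hi
    obtain ⟨d, hd, rfl⟩ := Finset.mem_image.mp hi
    intro h0
    have : (d : L) * (m : L) = 0 := congrArg Subtype.val h0
    rcases mul_eq_zero.mp this with h | h
    · exact hs0 d hd (Subtype.ext h)
    · exact hm h
  · rw [Finset.sum_image (fun (x : ↥A) (hx : x ∈ s) (y : ↥A) (hy : y ∈ s) hxy => by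
      have h2 : (x : L) * (m : L) = (y : L) * (m : L) := congrArg Subtype.val hxy
      exact Subtype.ext (mul_right_cancel₀ hm h2))]
    have hbval : (b : L) = (a : L) * (m : L)⁻¹ := by
      rw [eq_mul_inv_iff_mul_eq₀ hm]
      exact heq
    calc (b : L) = (∑ d ∈ s, ((d : L))⁻¹) * (m : L)⁻¹ := by rw [← hsum, hbval]
    _ = ∑ d ∈ s, (((d : L)) * (m : L))⁻¹ := by
        rw [Finset.sum_mul]
        exact Finset.sum_congr rfl fun d _ => by rw [mul_inv]

end SubringField

section LocSub

variable {L : Type u} [Field L]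

/-- The subring `A[1/w]` of `L`. -/
def locSub (A : Subring L) (w : L) (hw : w ∈ A) (hw0 : w ≠ 0) : Subring L where
  carrier := {x : L | ∃ a ∈ A, ∃ k : ℕ, x = a * (w⁻¹) ^ k}
  zero_mem' := ⟨0, A.zero_mem, 0, by simp⟩
  one_mem' := ⟨1, A.one_mem, 0, by simp⟩
  add_mem' := by
    rintro x y ⟨a, ha, k, rfl⟩ ⟨b, hb, l, rfl⟩
    refine ⟨a * w ^ l + b * w ^ k, A.add_mem (A.mul_mem ha (A.pow_mem hw l))
      (A.mul_mem hb (A.pow_mem hw k)), k + l, ?_⟩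
    have hcan : ∀ n : ℕ, w ^ n * w⁻¹ ^ n = 1 := fun n => by
      rw [inv_pow]; exact mul_inv_cancel₀ (pow_ne_zero n hw0)
    linear_combination (-(a * w⁻¹ ^ k)) * hcan l + (-(b * w⁻¹ ^ l)) * hcan k
  neg_mem' := by
    rintro x ⟨a, ha, k, rfl⟩
    exact ⟨-a, A.neg_mem ha, k, by ring⟩
  mul_mem' := by
    rintro x y ⟨a, ha, k, rfl⟩ ⟨b, hb, l, rfl⟩
    exact ⟨a * b, A.mul_mem ha hb, k + l, by rw [pow_add]; ring⟩

lemma le_locSub (A : Subring L) (w : L) (hw : w ∈ A) (hw0 : w ≠ 0) :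
    A ≤ locSub A w hw hw0 := fun a ha => ⟨a, ha, 0, by simp⟩

lemma winv_mem_locSub (A : Subring L) (w : L) (hw : w ∈ A) (hw0 : w ≠ 0) :
    w⁻¹ ∈ locSub A w hw hw0 := ⟨1, A.one_mem, 1, by simp⟩

lemma mem_locSub {A : Subring L} {w : L} {hw : w ∈ A} {hw0 : w ≠ 0} {x : L} :
    x ∈ locSub A w hw hw0 ↔ ∃ a ∈ A, ∃ k : ℕ, x = a * (w⁻¹) ^ k := Iff.rfl

/-- A subring `B` of `L` containing `A` in which `g` becomes invertible and whose
elements all have the form `a / g ^ k` is abstractly the localization of `A` away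
from `g`. -/
lemma loc_equiv (A B : Subring L) (hle : A ≤ B) (g : ↥A) (hg : (g : L) ≠ 0)
    (hinv : ((g : L))⁻¹ ∈ B)
    (hsurj : ∀ b : ↥B, ∃ (a : ↥A) (k : ℕ), (b : L) = (a : L) * (((g : L))⁻¹) ^ k) :
    Nonempty (Localization.Away g ≃+* ↥B) := by
  letI : Algebra ↥A ↥B := (Subring.inclusion hle).toAlgebra
  have halg : ∀ x : ↥A, ((algebraMap ↥A ↥B x : ↥B) : L) = (x : L) := fun x => rfl
  haveI : IsLocalization.Away g ↥B := by
    refine ⟨fun y => ?_, fun z => ?_, fun {x y} h => ?_⟩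
    · obtain ⟨k, hk⟩ := y.2
      rw [isUnit_iff_exists_inv]
      refine ⟨⟨((g : L))⁻¹ ^ k, B.pow_mem hinv k⟩, ?_⟩
      apply Subtype.ext
      show ((algebraMap ↥A ↥B y : ↥B) : L) * ((g : L))⁻¹ ^ k = 1
      rw [halg, ← hk]
      push_cast
      rw [inv_pow]
      exact mul_inv_cancel₀ (pow_ne_zero k hg)
    · obtain ⟨a, k, hak⟩ := hsurj z
      refine ⟨⟨a, ⟨g ^ k, ⟨k, rfl⟩⟩⟩, ?_⟩
      apply Subtype.ext
      show (z : L) * ((algebraMap ↥A ↥B (g ^ k) : ↥B) : L) = ((algebraMap ↥A ↥B a : ↥B) : L)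
      rw [halg, halg, hak]
      push_cast
      rw [inv_pow, mul_assoc, inv_mul_cancel₀ (pow_ne_zero k hg), mul_one]
    · refine ⟨1, ?_⟩
      have hxy : (x : L) = (y : L) := by
        have := congrArg Subtype.val h
        rwa [show ((algebraMap ↥A ↥B x : ↥B) : L) = (x : L) from rfl,
          show ((algebraMap ↥A ↥B y : ↥B) : L) = (y : L) from rfl] at this
      rw [Subtype.ext hxy]
  exact ⟨(IsLocalization.algEquiv (Submonoid.powers g) (Localization.Away g) ↥B).toRingEquiv⟩

/-- If `Localization.Away f` is Egyptian then any `A[1/(f*v)]` is Egyptian. -/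
lemma locSub_isEgyptian (A : Subring L) (f : ↥A) (hf : (f : L) ≠ 0)
    (hloc : IsEgyptian (Localization.Away f))
    (w : L) (hw : w ∈ A) (hw0 : w ≠ 0)
    (hdvd : ∃ v ∈ A, v ≠ 0 ∧ w = (f : L) * v) :
    IsEgyptian ↥(locSub A w hw hw0) := by
  obtain ⟨v, hvA, hv0, rfl⟩ := hdvd
  have hA' : IsEgyptian ↥(locSub A (f : L) f.2 hf) := by
    obtain ⟨e⟩ := loc_equiv A (locSub A (f : L) f.2 hf) (le_locSub _ _ _ _) f hf
      (winv_mem_locSub _ _ _ _)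
      (fun b => by
        obtain ⟨a, ha, k, hk⟩ := b.2
        exact ⟨⟨a, ha⟩, k, hk⟩)
    haveI : IsDomain (Localization.Away f) := by
      have hf' : f ≠ 0 := fun h => hf (by simp [h])
      exact IsLocalization.isDomain_localization
        (powers_le_nonZeroDivisors_of_noZeroDivisors hf')
    exact isEgyptian_of_ringEquiv e hloc
  apply isEgyptian_of_fractions (A := locSub A (f : L) f.2 hf) ?hle hA' ?hfrac
  case hle =>
    rintro x ⟨a, ha, k, rfl⟩
    refine ⟨a * v ^ k, A.mul_mem ha (A.pow_mem hvA k), k, ?_⟩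
    have hfk : (f : L) ^ k * ((f : L)⁻¹) ^ k = 1 := by
      rw [inv_pow]; exact mul_inv_cancel₀ (pow_ne_zero k hf)
    have hfvk : ((f : L) * v) ^ k * (((f : L) * v)⁻¹) ^ k = 1 := by
      rw [inv_pow]; exact mul_inv_cancel₀ (pow_ne_zero k hw0)
    linear_combination (a * v ^ k * (((f:L) * v)⁻¹) ^ k) * hfk
      - (a * ((f:L)⁻¹) ^ k) * hfvk
  case hfrac =>
    rintro ⟨x, a, ha, k, rfl⟩ hx0
    have hxL : a * ((f:L) * v)⁻¹ ^ k ≠ 0 := fun h => hx0 (Subtype.ext h)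
    refine ⟨⟨a * ((f : L)⁻¹) ^ k, ⟨a, ha, k, rfl⟩⟩, ⟨v ^ k, le_locSub _ _ _ _ (A.pow_mem hvA k)⟩,
      ?_, pow_ne_zero k hv0, ?_⟩
    · show a * ((f : L)⁻¹) ^ k ≠ 0
      intro h
      rcases mul_eq_zero.mp h with h' | h'
      · exact hxL (by rw [h', zero_mul])
      · exact pow_ne_zero k (inv_ne_zero hf) h'
    · show a * ((f:L) * v)⁻¹ ^ k * (v ^ k) = a * ((f : L)⁻¹) ^ k
      have hfk : (f : L) ^ k * ((f : L)⁻¹) ^ k = 1 := by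
        rw [inv_pow]; exact mul_inv_cancel₀ (pow_ne_zero k hf)
      have hfvk : ((f : L) * v) ^ k * (((f : L) * v)⁻¹) ^ k = 1 := by
        rw [inv_pow]; exact mul_inv_cancel₀ (pow_ne_zero k hw0)
      linear_combination (-(a * v ^ k * (((f:L) * v)⁻¹) ^ k)) * hfk
        + (a * ((f:L)⁻¹) ^ k) * hfvk
  -- done

end LocSub

section Clear

open Polynomial

variable {L : Type u} [Field L]

/-- Evaluation of a polynomial over a subring at a point of the closure lies in the
closure. -/
lemma eval₂_mem_closure (A : Subring L) (u : L) (q : Polynomial ↥A) :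
    Polynomial.eval₂ A.subtype u q ∈ Subring.closure ((A : Set L) ∪ {u}) := by
  rw [eval₂_eq_sum, Polynomial.sum_def]
  apply Subring.sum_mem
  intro i _
  apply Subring.mul_mem
  · exact Subring.subset_closure (Set.mem_union_left _ (q.coeff i).2)
  · exact Subring.pow_mem _ (Subring.subset_closure (Set.mem_union_right _ (Set.mem_singleton u))) i

/-- Clearing denominators: a polynomial over `A[1/w]` can be rescaled by a power of `w`
to a polynomial over `A` of no larger degree, nonzero if the original was. -/
lemma clear_denoms (A : Subring L) (w : L) (hw : w ∈ A) (hw0 : w ≠ 0) (u : L)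
    (p : Polynomial ↥(locSub A w hw hw0)) :
    ∃ (q : Polynomial ↥A) (k : ℕ), (p ≠ 0 → q ≠ 0) ∧ q.natDegree ≤ p.natDegree ∧
      Polynomial.eval₂ A.subtype u q
        = w ^ k * Polynomial.eval₂ (locSub A w hw hw0).subtype u p := by
  classical
  have H : ∀ i : ℕ, ∃ (a : ↥A) (k : ℕ), ((p.coeff i : L)) = (a : L) * (w⁻¹) ^ k := by
    intro i
    obtain ⟨a, ha, k, hk⟩ := (p.coeff i).2
    exact ⟨⟨a, ha⟩, k, hk⟩
  choose c k hck using H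
  set K := p.support.sup k with hK
  have hkK : ∀ i ∈ p.support, k i ≤ K := fun i hi => Finset.le_sup hi
  -- the cleared coefficients
  set b : ℕ → ↥A := fun i => c i * (⟨w, hw⟩ : ↥A) ^ (K - k i) with hb
  have hbL : ∀ i ∈ p.support, ((b i : L)) = (p.coeff i : L) * w ^ K := by
    intro i hi
    have h1 : ((b i : L)) = (c i : L) * w ^ (K - k i) := by push_cast [hb]; ring
    rw [h1, hck i]
    have hik : w ^ (k i) * (w ^ (k i))⁻¹ = 1 := mul_inv_cancel₀ (pow_ne_zero _ hw0)
    have hpow : w ^ (k i) * w ^ (K - k i) = w ^ K := by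
      rw [← pow_add, Nat.add_sub_cancel' (hkK i hi)]
    rw [inv_pow]
    linear_combination (-((c i : L) * w ^ (K - k i))) * hik
      + ((c i : L) * (w ^ (k i))⁻¹) * hpow
  have hqcoeff : ∀ j : ℕ, (∑ i ∈ p.support, Polynomial.C (b i) * Polynomial.X ^ i).coeff j
      = if j ∈ p.support then b j else 0 := by
    intro j
    rw [Polynomial.finset_sum_coeff]
    rw [Finset.sum_congr rfl (fun i (_ : i ∈ p.support) => Polynomial.coeff_C_mul_X_pow (b i) i j)]
    simp [Finset.sum_ite_eq' p.support j b]
  refine ⟨∑ i ∈ p.support, Polynomial.C (b i) * Polynomial.X ^ i, K, ?_, ?_, ?_⟩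
  · -- nonzero
    intro hp h0
    obtain ⟨i, hi⟩ := Finset.nonempty_of_ne_empty
      (fun h => hp (Polynomial.support_eq_empty.mp h))
    have : (∑ i ∈ p.support, Polynomial.C (b i) * Polynomial.X ^ i).coeff i = 0 := by
      rw [h0]; simp
    rw [hqcoeff i, if_pos hi] at this
    have hbi : ((b i : L)) = 0 := by rw [this]; rfl
    rw [hbL i hi] at hbi
    rcases mul_eq_zero.mp hbi with h' | h'
    · exact (Polynomial.mem_support_iff.mp hi) (by
        apply Subtype.ext
        simpa using h')
    · exact pow_ne_zero K hw0 h'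
  · -- degree
    rw [Polynomial.natDegree_le_iff_coeff_eq_zero]
    intro N hN
    rw [hqcoeff N, if_neg]
    intro hN'
    exact absurd (Polynomial.le_natDegree_of_mem_supp N hN') (not_le.mpr hN)
  · -- evaluation
    rw [Polynomial.eval₂_finset_sum]
    have : ∀ i ∈ p.support, Polynomial.eval₂ A.subtype u (Polynomial.C (b i) * Polynomial.X ^ i)
        = ((p.coeff i : L)) * w ^ K * u ^ i := by
      intro i hi
      rw [Polynomial.eval₂_mul, Polynomial.eval₂_C, Polynomial.eval₂_X_pow]
      rw [show (A.subtype (b i) : L) = ((b i : L)) from rfl, hbL i hi]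
    rw [Finset.sum_congr rfl this]
    conv_rhs => rw [Polynomial.eval₂_eq_sum, Polynomial.sum_def, Finset.mul_sum]
    apply Finset.sum_congr rfl
    intro i _
    show ((p.coeff i : L)) * w ^ K * u ^ i
      = w ^ K * (((locSub A w hw hw0).subtype (p.coeff i)) * u ^ i)
    rw [show ((locSub A w hw hw0).subtype (p.coeff i) : L) = ((p.coeff i : L)) from rfl]
    ring


/-- If there is no small-degree polynomial relation for `u` over `A`, then monomials
`c * u^i` with coefficients in `A[1/w]` are distinct across distinct powers. -/
lemma nodup_pow (A : Subring L) (w : L) (hw : w ∈ A) (hw0 : w ≠ 0) (u : L) (m : ℕ)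
    (hmin : ∀ q : Polynomial ↥A, q ≠ 0 → q.natDegree ≤ m →
      Polynomial.eval₂ A.subtype u q ≠ 0) :
    ∀ i j : ℕ, i < j → j ≤ m → ∀ c d : ↥(locSub A w hw hw0),
      (c : L) ≠ 0 → (d : L) ≠ 0 → (c : L) * u ^ i ≠ (d : L) * u ^ j := by
  intro i j hij hjm c d hc hd heq
  set q : Polynomial ↥(locSub A w hw hw0) :=
    Polynomial.C d * Polynomial.X ^ j - Polynomial.C c * Polynomial.X ^ i with hq
  have hqeval : Polynomial.eval₂ (locSub A w hw hw0).subtype u q = 0 := by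
    rw [hq, Polynomial.eval₂_sub, Polynomial.eval₂_mul, Polynomial.eval₂_mul,
      Polynomial.eval₂_C, Polynomial.eval₂_C, Polynomial.eval₂_X_pow,
      Polynomial.eval₂_X_pow]
    rw [sub_eq_zero]
    exact heq.symm
  have hq0 : q ≠ 0 := by
    intro h0
    have : q.coeff j = d := by
      rw [hq, Polynomial.coeff_sub, Polynomial.coeff_C_mul_X_pow, Polynomial.coeff_C_mul_X_pow,
        if_pos rfl, if_neg (Nat.ne_of_gt hij), sub_zero]
    rw [h0] at this
    simp only [Polynomial.coeff_zero] at this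
    exact hd (by rw [← this]; rfl)
  have hqdeg : q.natDegree ≤ j := by
    refine le_trans (Polynomial.natDegree_sub_le _ _) ?_
    rw [max_le_iff]
    exact ⟨Polynomial.natDegree_C_mul_X_pow_le d j,
      le_trans (Polynomial.natDegree_C_mul_X_pow_le c i) (le_of_lt hij)⟩
  obtain ⟨q', K, hq'0, hq'deg, hq'eval⟩ := clear_denoms A w hw hw0 u q
  refine hmin q' (hq'0 hq0) (le_trans hq'deg (le_trans hqdeg hjm)) ?_
  rw [hq'eval, hqeval, mul_zero]

end Clear

section EgyMain

variable {L : Type u} [Field L]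

lemma egy_main (Ab Bb : Subring L) (hAB : Ab ≤ Bb) (hA : IsEgyptian ↥Ab)
    (u : L) (hu : u ≠ 0) (huB : u ∈ Bb) (huB' : u⁻¹ ∈ Bb)
    (hrep : ∀ b : ↥Bb, b ≠ 0 → ∃ (M : ℕ) (I : Finset ℕ) (a : ℕ → ↥Ab),
      (∀ i ∈ I, (a i : L) ≠ 0) ∧ ((b : L) * u ^ M = ∑ i ∈ I, (a i : L) * u ^ i) ∧
      (∀ i ∈ I, ∀ j ∈ I, i < j → ∀ c d : ↥Ab, (c : L) ≠ 0 → (d : L) ≠ 0 →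
        (c : L) * u ^ i ≠ (d : L) * u ^ j)) :
    IsEgyptian ↥Bb := by
  classical
  apply isEgyptian_subring
  intro b hb
  obtain ⟨M, I, a, h0, hsum, hdis⟩ := hrep b hb
  have hspec : ∀ i : ℕ, ∃ s : Finset ↥Ab, i ∈ I →
      ((∀ d ∈ s, d ≠ 0) ∧ ((a i : L) = ∑ d ∈ s, (d : L)⁻¹)) := by
    intro i
    by_cases hi : i ∈ I
    · obtain ⟨s, hs0, hssum⟩ := subring_spec_of_isEgyptian Ab hA (a i)
        (fun h => h0 i hi (by rw [h]; rfl))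
      exact ⟨s, fun _ => ⟨hs0, hssum⟩⟩
    · exact ⟨∅, fun h => absurd h hi⟩
  choose S hS using hspec
  set δ : ℕ → ↥Ab → ↥Bb := fun i d =>
    ⟨(d : L) * u ^ M * (u⁻¹) ^ i,
      Bb.mul_mem (Bb.mul_mem (hAB d.2) (Bb.pow_mem huB M)) (Bb.pow_mem huB' i)⟩ with hδ
  have hδcoe : ∀ i d, ((δ i d : L)) = (d : L) * u ^ M * (u⁻¹) ^ i := fun i d => rfl
  have huM : u ^ M ≠ 0 := pow_ne_zero M hu
  have huI : ∀ i : ℕ, (u⁻¹) ^ i ≠ 0 := fun i => pow_ne_zero i (inv_ne_zero hu)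
  -- injectivity of δ i on each S i
  have hδinj : ∀ i : ℕ, ∀ x ∈ S i, ∀ y ∈ S i, δ i x = δ i y → x = y := by
    intro i x _ y _ h
    have := congrArg Subtype.val h
    rw [hδcoe, hδcoe] at this
    exact Subtype.ext (mul_right_cancel₀ huM (mul_right_cancel₀ (huI i) this))
  -- disjointness across powers
  have hdisj : ∀ i ∈ (I : Set ℕ), ∀ j ∈ (I : Set ℕ), i ≠ j →
      Disjoint ((S i).image (δ i)) ((S j).image (δ j)) := by
    intro i hi j hj hij
    rw [Finset.disjoint_left]
    rintro t ht1 ht2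
    obtain ⟨d, hd, rfl⟩ := Finset.mem_image.mp ht1
    obtain ⟨e, he, heq⟩ := Finset.mem_image.mp ht2
    have hcoe : (e : L) * u ^ M * (u⁻¹) ^ j = (d : L) * u ^ M * (u⁻¹) ^ i :=
      congrArg Subtype.val heq
    have hd0 : (d : L) ≠ 0 := fun h => (hS i hi).1 d hd (Subtype.ext h)
    have he0 : (e : L) ≠ 0 := fun h => (hS j hj).1 e he (Subtype.ext h)
    have hkey : (e : L) * u ^ i = (d : L) * u ^ j := by
      have h1 : (e : L) * (u⁻¹) ^ j = (d : L) * (u⁻¹) ^ i := by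
        apply mul_right_cancel₀ huM
        calc (e : L) * (u⁻¹) ^ j * u ^ M = (e : L) * u ^ M * (u⁻¹) ^ j := by ring
        _ = (d : L) * u ^ M * (u⁻¹) ^ i := hcoe
        _ = (d : L) * (u⁻¹) ^ i * u ^ M := by ring
      have hui : ∀ n : ℕ, (u⁻¹) ^ n * u ^ n = 1 := fun n => by
        rw [inv_pow]; exact inv_mul_cancel₀ (pow_ne_zero n hu)
      linear_combination (u ^ i * u ^ j) * h1 + ((d:L) * u ^ j) * hui i
        - ((e:L) * u ^ i) * hui j
    rcases lt_or_gt_of_ne hij with h | h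
    · exact hdis i hi j hj h e d he0 hd0 hkey
    · exact hdis j hj i hi h d e hd0 he0 hkey.symm
  refine ⟨I.biUnion (fun i => (S i).image (δ i)), ?_, ?_⟩
  · intro t ht
    obtain ⟨i, hi, ht'⟩ := Finset.mem_biUnion.mp ht
    obtain ⟨d, hd, rfl⟩ := Finset.mem_image.mp ht'
    intro h
    have : (d : L) * u ^ M * (u⁻¹) ^ i = 0 := congrArg Subtype.val h
    rcases mul_eq_zero.mp this with h' | h'
    · rcases mul_eq_zero.mp h' with h'' | h''
      · exact (hS i hi).1 d hd (Subtype.ext h'')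
      · exact huM h''
    · exact huI i h'
  · rw [Finset.sum_biUnion hdisj]
    have hinner : ∀ i ∈ I, ∑ t ∈ (S i).image (δ i), (t : L)⁻¹
        = ((a i : L) * u ^ i) * (u ^ M)⁻¹ := by
      intro i hi
      rw [Finset.sum_image (hδinj i)]
      have : ∀ d ∈ S i, ((δ i d : L))⁻¹ = (d : L)⁻¹ * ((u ^ M)⁻¹ * u ^ i) := by
        intro d _
        rw [hδcoe, show (u⁻¹) ^ i = (u ^ i)⁻¹ from inv_pow u i,
          mul_inv, mul_inv, inv_inv, mul_assoc]
      rw [Finset.sum_congr rfl this, ← Finset.sum_mul, ← (hS i hi).2]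
      ring
    rw [Finset.sum_congr rfl hinner, ← Finset.sum_mul, ← hsum, mul_assoc,
      mul_inv_cancel₀ huM, mul_one]

end EgyMain

section StepTrans

open Polynomial

variable {L : Type u} [Field L]

lemma step_trans (A : Subring L) (f : ↥A) (hf : (f : L) ≠ 0)
    (hloc : IsEgyptian (Localization.Away f)) (u : L) (hu : u ≠ 0)
    (hrel : ∀ q : Polynomial ↥A, q ≠ 0 → Polynomial.eval₂ A.subtype u q ≠ 0) :
    IsGenericallyEgyptian ↥(Subring.closure ((A : Set L) ∪ {u})) := by
  classical
  set A' := locSub A (f : L) f.2 hf with hA'def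
  have hA' : IsEgyptian ↥A' :=
    locSub_isEgyptian A f hf hloc (f : L) f.2 hf ⟨1, A.one_mem, one_ne_zero, (mul_one _).symm⟩
  have hcanu : ∀ n : ℕ, u ^ n * u⁻¹ ^ n = 1 := fun n => by
    rw [inv_pow]; exact mul_inv_cancel₀ (pow_ne_zero n hu)
  -- the ring B = A'[u, 1/u]
  set B : Subring L :=
    { carrier := {x : L | ∃ (p : Polynomial ↥A') (N : ℕ),
        x = Polynomial.eval₂ A'.subtype u p * (u⁻¹) ^ N}
      zero_mem' := ⟨0, 0, by simp⟩
      one_mem' := ⟨1, 0, by simp⟩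
      add_mem' := by
        rintro x y ⟨p, N, rfl⟩ ⟨q, M, rfl⟩
        refine ⟨p * Polynomial.X ^ M + q * Polynomial.X ^ N, N + M, ?_⟩
        rw [Polynomial.eval₂_add, Polynomial.eval₂_mul, Polynomial.eval₂_mul,
          Polynomial.eval₂_X_pow, Polynomial.eval₂_X_pow]
        linear_combination (-(Polynomial.eval₂ A'.subtype u p * u⁻¹ ^ N)) * hcanu M
          + (-(Polynomial.eval₂ A'.subtype u q * u⁻¹ ^ M)) * hcanu N
      neg_mem' := by
        rintro x ⟨p, N, rfl⟩
        exact ⟨-p, N, by rw [Polynomial.eval₂_neg]; ring⟩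
      mul_mem' := by
        rintro x y ⟨p, N, rfl⟩ ⟨q, M, rfl⟩
        refine ⟨p * q, N + M, ?_⟩
        rw [Polynomial.eval₂_mul, pow_add]
        ring } with hBdef
  have hmemB : ∀ x : L, x ∈ B ↔ ∃ (p : Polynomial ↥A') (N : ℕ),
      x = Polynomial.eval₂ A'.subtype u p * (u⁻¹) ^ N := fun x => Iff.rfl
  have hA'B : A' ≤ B := by
    intro a ha
    exact ⟨Polynomial.C ⟨a, ha⟩, 0, by simp [Polynomial.eval₂_C]⟩
  have huB : u ∈ B := ⟨Polynomial.X, 0, by simp⟩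
  have huB' : u⁻¹ ∈ B := ⟨1, 1, by simp⟩
  set Au := Subring.closure ((A : Set L) ∪ {u}) with hAu
  have hfAu : (f : L) ∈ Au := Subring.subset_closure (Set.mem_union_left _ f.2)
  have huAu : u ∈ Au := Subring.subset_closure (Set.mem_union_right _ (Set.mem_singleton u))
  have hle : Au ≤ B := by
    apply Subring.closure_le.mpr
    rintro x (hx | hx)
    · exact hA'B (le_locSub A (f : L) f.2 hf hx)
    · rw [Set.mem_singleton_iff] at hx
      rw [hx]; exact huB
  have hgLne : (f : L) * u ≠ 0 := mul_ne_zero hf hu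
  set g : ↥Au := ⟨(f : L) * u, Au.mul_mem hfAu huAu⟩ with hg
  have hginv : (((g : L)))⁻¹ ∈ B := by
    show ((f : L) * u)⁻¹ ∈ B
    refine ⟨Polynomial.C ⟨(f : L)⁻¹, winv_mem_locSub A (f : L) f.2 hf⟩, 1, ?_⟩
    rw [Polynomial.eval₂_C, mul_inv, pow_one]
    rfl
  have hsurj : ∀ b : ↥B, ∃ (a : ↥Au) (k : ℕ), (b : L) = (a : L) * (((g : L))⁻¹) ^ k := by
    rintro ⟨x, p, N, rfl⟩
    obtain ⟨q, K, hq0, hqdeg, hqeval⟩ := clear_denoms A (f : L) f.2 hf u p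
    refine ⟨⟨Polynomial.eval₂ A.subtype u q * (f : L) ^ N * u ^ K,
      Au.mul_mem (Au.mul_mem (eval₂_mem_closure A u q) (Au.pow_mem hfAu N))
        (Au.pow_mem huAu K)⟩, K + N, ?_⟩
    show Polynomial.eval₂ A'.subtype u p * (u⁻¹) ^ N
      = Polynomial.eval₂ A.subtype u q * (f : L) ^ N * u ^ K * (((f : L) * u)⁻¹) ^ (K + N)
    rw [hqeval]
    have hcfu : ((f : L) * u) ^ (K + N) * (((f : L) * u)⁻¹) ^ (K + N) = 1 := by
      rw [inv_pow]; exact mul_inv_cancel₀ (pow_ne_zero _ hgLne)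
    linear_combination (-(Polynomial.eval₂ A'.subtype u p * u⁻¹ ^ N)) * hcfu
      + (Polynomial.eval₂ A'.subtype u p * (f : L) ^ (K + N) * (((f : L) * u)⁻¹) ^ (K + N)
          * u ^ K) * hcanu N
  have hBegy : IsEgyptian ↥B := by
    apply egy_main A' B hA'B hA' u hu huB huB'
    rintro ⟨x, hxB⟩ hb0
    obtain ⟨p, N, rfl⟩ := hxB
    have hp0 : p ≠ 0 := by
      rintro rfl
      apply hb0
      apply Subtype.ext
      simp
    refine ⟨N, p.support, fun i => p.coeff i, ?_, ?_, ?_⟩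
    · intro i hi
      exact fun h => Polynomial.mem_support_iff.mp hi (Subtype.ext h)
    · show Polynomial.eval₂ A'.subtype u p * (u⁻¹) ^ N * u ^ N = _
      rw [Polynomial.eval₂_eq_sum, Polynomial.sum_def]
      rw [mul_assoc, mul_comm ((u⁻¹) ^ N) (u ^ N), hcanu N, mul_one]
      rfl
    · intro i hi j hj hij c d hc hd
      exact nodup_pow A (f : L) f.2 hf u j (fun q hq _ => hrel q hq) i j hij le_rfl c d hc hd
  -- conclude
  obtain ⟨e⟩ := loc_equiv Au B hle g (by exact hgLne) hginv hsurj
  exact ⟨g, fun h => hgLne (congrArg Subtype.val h), isEgyptian_of_ringEquiv e.symm hBegy⟩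

end StepTrans

section StepAlg

open Polynomial Finset

variable {L : Type u} [Field L]

lemma step_alg (A : Subring L) (f : ↥A) (hf : (f : L) ≠ 0)
    (hloc : IsEgyptian (Localization.Away f)) (u : L) (hu : u ≠ 0)
    (hrel : ∃ p : Polynomial ↥A, p ≠ 0 ∧ Polynomial.eval₂ A.subtype u p = 0) :
    IsGenericallyEgyptian ↥(Subring.closure ((A : Set L) ∪ {u})) := by
  classical
  -- minimal degree of a vanishing polynomial
  have hex : ∃ m : ℕ, ∃ p : Polynomial ↥A, p ≠ 0 ∧ p.natDegree ≤ m ∧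
      Polynomial.eval₂ A.subtype u p = 0 := by
    obtain ⟨p, hp0, hpe⟩ := hrel
    exact ⟨p.natDegree, p, hp0, le_rfl, hpe⟩
  set n := Nat.find hex with hn
  obtain ⟨p, hp0, hpdeg, hpe⟩ := Nat.find_spec hex
  have hmin : ∀ m, m < n → ¬ ∃ q : Polynomial ↥A, q ≠ 0 ∧ q.natDegree ≤ m ∧
      Polynomial.eval₂ A.subtype u q = 0 := fun m hm => Nat.find_min hex hm
  have hn1 : 1 ≤ n := by
    by_contra h
    push_neg at h
    have hdeg0 : p.natDegree ≤ 0 := by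
      rw [← hn] at hpdeg; omega
    rw [Polynomial.eq_C_of_natDegree_le_zero hdeg0] at hpe hp0
    rw [Polynomial.eval₂_C] at hpe
    apply hp0
    rw [show p.coeff 0 = 0 from Subtype.ext hpe, map_zero]
  have hminpoly : ∀ q : Polynomial ↥A, q ≠ 0 → q.natDegree ≤ n - 1 →
      Polynomial.eval₂ A.subtype u q ≠ 0 := by
    intro q hq0 hqdeg hqe
    exact hmin (n - 1) (by omega) ⟨q, hq0, hqdeg, hqe⟩
  have hpdegeq : p.natDegree = n := by
    refine le_antisymm hpdeg ?_
    by_contra h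
    push_neg at h
    exact hmin p.natDegree (by omega) ⟨p, hp0, le_rfl, hpe⟩
  set c : ℕ → ↥A := fun i => p.coeff i with hc
  have hcn : (c n : L) ≠ 0 := by
    intro h
    have : p.coeff p.natDegree = 0 := by rw [hpdegeq]; exact Subtype.ext h
    exact hp0 (Polynomial.leadingCoeff_eq_zero.mp this)
  have hc0 : (c 0 : L) ≠ 0 := by
    intro h
    have hdvx : Polynomial.eval₂ A.subtype u p.divX * u + ((p.coeff 0 : ↥A) : L)
        = Polynomial.eval₂ A.subtype u p := by
      conv_rhs => rw [← Polynomial.divX_mul_X_add p]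
      rw [Polynomial.eval₂_add, Polynomial.eval₂_mul, Polynomial.eval₂_X, Polynomial.eval₂_C]
      rfl
    have hc00 : ((p.coeff 0 : ↥A) : L) = 0 := h
    rw [hc00, add_zero, hpe] at hdvx
    have hdx0 : Polynomial.eval₂ A.subtype u p.divX = 0 := by
      rcases mul_eq_zero.mp hdvx with h' | h'
      · exact h'
      · exact absurd h' hu
    have hdvxne : p.divX ≠ 0 := by
      rw [Ne, Polynomial.divX_eq_zero_iff]
      intro hpc
      apply hp0
      rw [hpc, show p.coeff 0 = 0 from Subtype.ext hc00, map_zero]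
    refine hmin (n - 1) (by omega) ⟨p.divX, hdvxne, ?_, hdx0⟩
    rw [Polynomial.natDegree_divX_eq_natDegree_tsub_one, hpdegeq]
  -- the element w = f * c0 * cn
  have hccA : (c 0 : L) * (c n : L) ∈ A := A.mul_mem (c 0).2 (c n).2
  set w : L := (f : L) * ((c 0 : L) * (c n : L)) with hw
  have hwA : w ∈ A := A.mul_mem f.2 hccA
  have hw0 : w ≠ 0 := mul_ne_zero hf (mul_ne_zero hc0 hcn)
  set A'' := locSub A w hwA hw0 with hA''def
  have hA'' : IsEgyptian ↥A'' :=
    locSub_isEgyptian A f hf hloc w hwA hw0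
      ⟨(c 0 : L) * (c n : L), hccA, mul_ne_zero hc0 hcn, rfl⟩
  -- inverses of c0 and cn are in A''
  have hcninv : ((c n : L))⁻¹ ∈ A'' := by
    refine ⟨(f : L) * (c 0 : L), A.mul_mem f.2 (c 0).2, 1, ?_⟩
    rw [pow_one, hw]
    field_simp
  have hc0inv : ((c 0 : L))⁻¹ ∈ A'' := by
    refine ⟨(f : L) * (c n : L), A.mul_mem f.2 (c n).2, 1, ?_⟩
    rw [pow_one, hw]
    field_simp
  have hAA'' : A ≤ A'' := le_locSub A w hwA hw0
  -- the master relation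
  have hREL : ∑ i ∈ Finset.range (n + 1), (c i : L) * u ^ i = 0 := by
    have := Polynomial.eval₂_eq_sum_range (p := p) A.subtype u
    rw [hpe, hpdegeq] at this
    exact this.symm
  -- coefficients for the reduction of u^n
  set e : ℕ → ↥A'' := fun i => ⟨-(c i : L) * ((c n : L))⁻¹,
    A''.mul_mem (A''.neg_mem (hAA'' (c i).2)) hcninv⟩ with he
  have hcncan : (c n : L) * ((c n : L))⁻¹ = 1 := mul_inv_cancel₀ hcn
  have hun : u ^ n = ∑ i ∈ Finset.range n, (e i : L) * u ^ i := by
    apply mul_left_cancel₀ hcn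
    have h1 : (c n : L) * u ^ n = -∑ i ∈ Finset.range n, (c i : L) * u ^ i := by
      have h2 := hREL
      rw [Finset.sum_range_succ] at h2
      linear_combination h2
    rw [h1, Finset.mul_sum]
    rw [← Finset.sum_neg_distrib]
    apply Finset.sum_congr rfl
    intro i _
    show -((c i : L) * u ^ i) = (c n : L) * ((-(c i : L) * ((c n : L))⁻¹) * u ^ i)
    linear_combination ((c i : L) * u ^ i) * hcncan
  -- coefficients for u⁻¹
  set e' : ℕ → ↥A'' := fun i => ⟨-(c (i + 1) : L) * ((c 0 : L))⁻¹,
    A''.mul_mem (A''.neg_mem (hAA'' (c (i + 1)).2)) hc0inv⟩ with he'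
  have hc0can : (c 0 : L) * ((c 0 : L))⁻¹ = 1 := mul_inv_cancel₀ hc0
  have huinv : u⁻¹ = ∑ i ∈ Finset.range n, (e' i : L) * u ^ i := by
    have h3 : ∑ i ∈ Finset.range n, (c (i + 1) : L) * u ^ (i + 1) = -(c 0 : L) := by
      have h2 := hREL
      rw [Finset.sum_range_succ'] at h2
      simp only [pow_zero, mul_one] at h2
      linear_combination h2
    refine inv_eq_of_mul_eq_one_right ?_
    rw [Finset.mul_sum]
    have h4 : ∀ i ∈ Finset.range n, u * ((e' i : L) * u ^ i)
        = ((c (i + 1) : L) * u ^ (i + 1)) * (-((c 0 : L))⁻¹) := by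
      intro i _
      show u * ((-(c (i + 1) : L) * ((c 0 : L))⁻¹) * u ^ i) = _
      ring
    rw [Finset.sum_congr rfl h4, ← Finset.sum_mul, h3]
    linear_combination hc0can
  -- the ring B : the A''-span of u^i, i < n
  set S : Set L := {x : L | ∃ a : ℕ → ↥A'', x = ∑ i ∈ Finset.range n, (a i : L) * u ^ i}
    with hSdef
  have hS0 : (0 : L) ∈ S := ⟨fun _ => 0, by simp⟩
  have hSadd : ∀ x ∈ S, ∀ y ∈ S, x + y ∈ S := by
    rintro x ⟨a, rfl⟩ y ⟨b, rfl⟩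
    refine ⟨fun i => a i + b i, ?_⟩
    rw [← Finset.sum_add_distrib]
    apply Finset.sum_congr rfl
    intro i _
    push_cast
    ring
  have hSneg : ∀ x ∈ S, -x ∈ S := by
    rintro x ⟨a, rfl⟩
    refine ⟨fun i => -(a i), ?_⟩
    rw [← Finset.sum_neg_distrib]
    apply Finset.sum_congr rfl
    intro i _
    push_cast
    ring
  have hSsmul : ∀ (t : ↥A''), ∀ x ∈ S, (t : L) * x ∈ S := by
    rintro t x ⟨a, rfl⟩
    refine ⟨fun i => t * a i, ?_⟩
    rw [Finset.mul_sum]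
    apply Finset.sum_congr rfl
    intro i _
    push_cast
    ring
  have hSindic : ∀ m : ℕ, m < n → u ^ m ∈ S := by
    intro m hm
    refine ⟨fun i => if i = m then 1 else 0, ?_⟩
    have h5 : ∀ i ∈ Finset.range n, (((if i = m then (1 : ↥A'') else 0) : ↥A'') : L) * u ^ i
        = if i = m then u ^ i else 0 := by
      intro i _
      by_cases h : i = m <;> simp [h]
    rw [Finset.sum_congr rfl h5, Finset.sum_ite_eq' (Finset.range n) m (fun i => u ^ i),
      if_pos (Finset.mem_range.mpr hm)]
  have hSupow : ∀ m : ℕ, u ^ m ∈ S := by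
    intro m
    induction m using Nat.strong_induction_on with
    | _ m ih =>
      by_cases hm : m < n
      · exact hSindic m hm
      · have hmn : n ≤ m := le_of_not_gt hm
        have h6 : u ^ m = ∑ i ∈ Finset.range n, (e i : L) * u ^ (m - n + i) := by
          calc u ^ m = u ^ n * u ^ (m - n) := by
                rw [← pow_add]; congr 1; omega
          _ = ∑ i ∈ Finset.range n, (e i : L) * u ^ i * u ^ (m - n) := by
                rw [hun, Finset.sum_mul]
          _ = ∑ i ∈ Finset.range n, (e i : L) * u ^ (m - n + i) := by
                apply Finset.sum_congr rfl
                intro i _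
                rw [pow_add]
                ring
        rw [h6]
        apply Finset.sum_induction _ (· ∈ S) (fun a b ha hb => hSadd a ha b hb) hS0
        intro i hi
        have hlt : m - n + i < m := by
          have := Finset.mem_range.mp hi; omega
        exact hSsmul (e i) _ (ih _ hlt)
  have hSmulu : ∀ x ∈ S, ∀ (m : ℕ), x * u ^ m ∈ S := by
    rintro x ⟨a, rfl⟩ m
    rw [Finset.sum_mul]
    apply Finset.sum_induction _ (· ∈ S) (fun a b ha hb => hSadd a ha b hb) hS0
    intro i _
    have h7 : (a i : L) * u ^ i * u ^ m = (a i : L) * u ^ (i + m) := by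
      rw [pow_add]; ring
    rw [h7]
    exact hSsmul _ _ (hSupow _)
  have hSmul : ∀ x ∈ S, ∀ y ∈ S, x * y ∈ S := by
    intro x hx y hy
    obtain ⟨b, rfl⟩ := hy
    rw [Finset.mul_sum]
    apply Finset.sum_induction _ (· ∈ S) (fun a b ha hb => hSadd a ha b hb) hS0
    intro i _
    have h8 : x * ((b i : L) * u ^ i) = (b i : L) * (x * u ^ i) := by ring
    rw [h8]
    exact hSsmul _ _ (hSmulu x hx i)
  set B : Subring L :=
    { carrier := S
      zero_mem' := hS0
      one_mem' := by simpa using hSupow 0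
      add_mem' := fun hx hy => hSadd _ hx _ hy
      neg_mem' := fun hx => hSneg _ hx
      mul_mem' := fun hx hy => hSmul _ hx _ hy } with hB
  have hA''B : A'' ≤ B := by
    intro t ht
    have := hSsmul ⟨t, ht⟩ 1 (by simpa using hSupow 0)
    exact (by simpa using this : t ∈ S)
  have huB : u ∈ B := by exact (by simpa using hSupow 1 : u ∈ S)
  have huB' : u⁻¹ ∈ B := ⟨e', huinv⟩
  set Au := Subring.closure ((A : Set L) ∪ {u}) with hAu
  have hwAu : w ∈ Au := Subring.subset_closure (Set.mem_union_left _ hwA)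
  have huAu : u ∈ Au := Subring.subset_closure (Set.mem_union_right _ (Set.mem_singleton u))
  have hle : Au ≤ B := by
    apply Subring.closure_le.mpr
    rintro x (hx | hx)
    · exact hA''B (hAA'' hx)
    · rw [Set.mem_singleton_iff] at hx
      rw [hx]; exact huB
  have hgLne : w * u ≠ 0 := mul_ne_zero hw0 hu
  set g : ↥Au := ⟨w * u, Au.mul_mem hwAu huAu⟩ with hg
  have hginv : ((g : L))⁻¹ ∈ B := by
    show (w * u)⁻¹ ∈ B
    rw [mul_inv]
    exact hSsmul ⟨w⁻¹, winv_mem_locSub A w hwA hw0⟩ u⁻¹ huB'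
  have hsurj : ∀ b : ↥B, ∃ (a : ↥Au) (k : ℕ), (b : L) = (a : L) * (((g : L))⁻¹) ^ k := by
    rintro ⟨x, hxS⟩
    obtain ⟨a, rfl⟩ := hxS
    have hch : ∀ i : ℕ, ∃ (α : ↥A) (k : ℕ), ((a i : L)) = (α : L) * (w⁻¹) ^ k := by
      intro i
      obtain ⟨α, hα, k, hk⟩ := (a i).2
      exact ⟨⟨α, hα⟩, k, hk⟩
    choose α k hk using hch
    set K := (Finset.range n).sup k with hK
    have hkK : ∀ i ∈ Finset.range n, k i ≤ K := fun i hi => Finset.le_sup hi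
    refine ⟨⟨∑ i ∈ Finset.range n, (α i : L) * w ^ (K - k i) * u ^ (K + i), ?_⟩, K, ?_⟩
    · apply Subring.sum_mem
      intro i _
      exact Au.mul_mem (Au.mul_mem (Subring.subset_closure (Set.mem_union_left _ (α i).2))
        (Au.pow_mem hwAu _)) (Au.pow_mem huAu _)
    · show ∑ i ∈ Finset.range n, (a i : L) * u ^ i
        = (∑ i ∈ Finset.range n, (α i : L) * w ^ (K - k i) * u ^ (K + i)) * ((w * u)⁻¹) ^ K
      rw [Finset.sum_mul]
      apply Finset.sum_congr rfl
      intro i hi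
      rw [hk i]
      have hwcan : w ^ (k i) * (w⁻¹) ^ (k i) = 1 := by
        rw [inv_pow]; exact mul_inv_cancel₀ (pow_ne_zero _ hw0)
      have hpow : w ^ (k i) * w ^ (K - k i) = w ^ K := by
        rw [← pow_add, Nat.add_sub_cancel' (hkK i hi)]
      have hwu : (w * u) ^ K * ((w * u)⁻¹) ^ K = 1 := by
        rw [inv_pow]; exact mul_inv_cancel₀ (pow_ne_zero _ hgLne)
      linear_combination ((α i : L) * w ^ (K - k i) * u ^ (K + i) * ((w * u)⁻¹) ^ K) * hwcan
        - ((α i : L) * (w⁻¹) ^ (k i) * u ^ i * u ^ K * ((w * u)⁻¹) ^ K) * hpow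
        - ((α i : L) * (w⁻¹) ^ (k i) * u ^ i) * hwu
  have hBegy : IsEgyptian ↥B := by
    apply egy_main A'' B hA''B hA'' u hu huB huB'
    rintro ⟨x, hxS⟩ hb0
    obtain ⟨a, rfl⟩ := hxS
    refine ⟨0, (Finset.range n).filter (fun i => (a i : L) ≠ 0), a, ?_, ?_, ?_⟩
    · intro i hi
      exact (Finset.mem_filter.mp hi).2
    · show (∑ i ∈ Finset.range n, (a i : L) * u ^ i) * u ^ 0 = _
      rw [pow_zero, mul_one]
      refine (Finset.sum_filter_of_ne ?_).symm
      intro i _ h h0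
      exact h (by rw [h0, zero_mul])
    · intro i hi j hj hij cc dd hcc hdd
      have hjn : j ≤ n - 1 := by
        have := Finset.mem_range.mp (Finset.mem_filter.mp hj).1
        omega
      exact nodup_pow A w hwA hw0 u (n - 1) hminpoly i j hij hjn cc dd hcc hdd
  obtain ⟨eqv⟩ := loc_equiv Au B hle g (by exact hgLne) hginv hsurj
  exact ⟨g, fun h => hgLne (congrArg Subtype.val h), isEgyptian_of_ringEquiv eqv.symm hBegy⟩

end StepAlg

section Assembly

variable {L : Type u} [Field L]

lemma step_main (A : Subring L) (hA : IsGenericallyEgyptian ↥A) (u : L) :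
    IsGenericallyEgyptian ↥(Subring.closure ((A : Set L) ∪ {u})) := by
  by_cases hu : u ∈ A
  · have hcl : Subring.closure ((A : Set L) ∪ {u}) = A := by
      apply le_antisymm
      · apply Subring.closure_le.mpr
        rintro x (hx | hx)
        · exact hx
        · rw [Set.mem_singleton_iff] at hx
          rw [hx]; exact hu
      · exact le_trans (le_refl A)
          (fun x hx => Subring.subset_closure (Set.mem_union_left _ hx))
    rw [hcl]
    exact hA
  · have hu0 : u ≠ 0 := fun h => hu (h ▸ A.zero_mem)
    obtain ⟨f, hf, hloc⟩ := hA
    have hfL : (f : L) ≠ 0 := fun h => hf (Subtype.ext h)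
    by_cases hrel : ∃ p : Polynomial ↥A, p ≠ 0 ∧ Polynomial.eval₂ A.subtype u p = 0
    · exact step_alg A f hfL hloc u hu0 hrel
    · push_neg at hrel
      exact step_trans A f hfL hloc u hu0 (fun q hq => hrel q hq)

lemma closure_finset_gen (t : Finset L) :
    ∀ (A : Subring L), IsGenericallyEgyptian ↥A →
      IsGenericallyEgyptian ↥(Subring.closure ((A : Set L) ∪ (t : Set L))) := by
  classical
  induction t using Finset.induction_on with
  | empty =>
    intro A hA
    rw [Finset.coe_empty, Set.union_empty, Subring.closure_eq]
    exact hA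
  | @insert u t hut IH =>
    intro A hA
    have h1 : Subring.closure ((A : Set L) ∪ ((insert u t : Finset L) : Set L))
        = Subring.closure ((Subring.closure ((A : Set L) ∪ (t : Set L)) : Set L) ∪ {u}) := by
      apply le_antisymm
      · apply Subring.closure_le.mpr
        rintro x (hx | hx)
        · exact Subring.subset_closure (Set.mem_union_left _ (Subring.subset_closure
            (Set.mem_union_left _ hx)))
        · rw [Finset.coe_insert] at hx
          rcases Set.mem_insert_iff.mp hx with h | h
          · exact Subring.subset_closure (Set.mem_union_right _ (by rw [h]; rfl))
          · exact Subring.subset_closure (Set.mem_union_left _ (Subring.subset_closure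
              (Set.mem_union_right _ h)))
      · apply Subring.closure_le.mpr
        rintro x (hx | hx)
        · have hmono : Subring.closure ((A : Set L) ∪ (t : Set L))
              ≤ Subring.closure ((A : Set L) ∪ ((insert u t : Finset L) : Set L)) := by
            apply Subring.closure_mono
            apply Set.union_subset_union_right
            rw [Finset.coe_insert]
            exact Set.subset_insert u (t : Set L)
          exact hmono hx
        · rw [Set.mem_singleton_iff] at hx
          refine Subring.subset_closure (Set.mem_union_right _ ?_)
          rw [hx, Finset.coe_insert]
          exact Set.mem_insert_iff.mpr (Or.inl rfl)
    rw [h1]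
    exact step_main _ (IH A hA) u

end Assembly


/-- Let `D` be a generically Egyptian domain, `L` a field extension of the fraction field
of `D` (i.e. a field in which `D` embeds), and `R` a `D`-subalgebra of `L` that is finitely
generated as a `D`-algebra.  Then `R` is generically Egyptian. -/
theorem statement9 (D : Type*) [CommRing D] [IsDomain D] (hD : IsGenericallyEgyptian D)
    (L : Type u) [Field L] [Algebra D L]
    (hinj : Function.Injective (algebraMap D L))
    (R : Subalgebra D L) (hR : R.FG) :
    IsGenericallyEgyptian R := by
  obtain ⟨s, hs⟩ := hR
  -- the image of D in L
  set D₀ : Subring L := (algebraMap D L).range with hD₀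
  have e : D ≃+* ↥D₀ := RingEquiv.ofBijective (algebraMap D L).rangeRestrict
    ⟨fun x y h => hinj (congrArg Subtype.val h), (algebraMap D L).rangeRestrict_surjective⟩
  have hD₀gen : IsGenericallyEgyptian ↥D₀ := isGenericallyEgyptian_of_ringEquiv e hD
  have hmain := closure_finset_gen s D₀ hD₀gen
  have htoSub : R.toSubring = Subring.closure ((D₀ : Set L) ∪ (s : Set L)) := by
    rw [← hs, Algebra.adjoin_eq_ring_closure, hD₀, RingHom.coe_range]
  rw [← htoSub] at hmain
  exact hmain
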